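/- Let a₁, a₂, a₃ ∈ (0,1) and let A₂ = [[0, 1, 1], [a₁, 0, a₃], [1, a₂, 0]]. Then there exists a vector x in the standard simplex of ℝ³ with all three coordinates strictly positive such that A₂x = (c,c,c)ᵀ for some c ∈ ℝ if and only if a₁ + a₃ > 1. -/

import Mathlib

/-- Condition for the existence of a completely mixed strategy (all coordinates strictly
positive, lying in the standard simplex of `ℝ³`) making the row player indifferent
between all three pure strategies. -/
theorem classA2_indifference_iff (a₁ a₂ a₃ : ℝ)
    (h₁ : a₁ ∈ Set.Ioo (0:ℝ) 1) (h₂ : a₂ ∈ Set.Ioo (0:ℝ) 1) (h₃ : a₃ ∈ Set.Ioo (0:ℝ) 1) :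
    (∃ x : Fin 3 → ℝ, (∀ j, 0 < x j) ∧ (∑ j, x j = 1) ∧
        ∃ c : ℝ, ∀ j, (!![0, 1, 1; a₁, 0, a₃; 1, a₂, 0]).mulVec x j = c) ↔
      1 < a₁ + a₃ := by
  obtain ⟨ha₁0, ha₁1⟩ := h₁
  obtain ⟨ha₂0, ha₂1⟩ := h₂
  obtain ⟨ha₃0, ha₃1⟩ := h₃
  constructor
  · rintro ⟨x, hpos, hsum, c, hc⟩
    have h0 := hc 0
    have h1 := hc 1
    have h2 := hc 2
    simp [Matrix.mulVec, dotProduct, Fin.sum_univ_three] at h0 h1 h2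
    have p0 := hpos 0
    have p1 := hpos 1
    have p2 := hpos 2
    nlinarith [mul_pos p1 (sub_pos.mpr ha₂1), mul_pos p2 ha₃0, mul_pos p1 ha₁0,
      mul_pos (mul_pos p1 (sub_pos.mpr ha₂1)) (sub_pos.mpr ha₁1)]
  · intro h
    set u : ℝ := a₁ + a₃ - 1 with hu
    set k : ℝ := 1 - a₁ * (1 - a₂) with hk
    have hu0 : 0 < u := by linarith
    have hk0 : 0 < k := by nlinarith
    set y1 : ℝ := (1 - a₂) * u + k with hy1
    have hy10 : 0 < y1 := by nlinarith
    set S : ℝ := y1 + u + k with hS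
    have hS0 : 0 < S := by linarith
    refine ⟨![y1 / S, u / S, k / S], ?_, ?_, (u + k) / S, ?_⟩
    · intro j
      fin_cases j <;> simp <;> positivity
    · simp [Fin.sum_univ_three]
      field_simp
      linarith [hS]
    · intro j
      fin_cases j <;>
        simp [Matrix.mulVec, dotProduct, Fin.sum_univ_three] <;>
        field_simp <;> simp only [hy1, hu, hk] <;> ring
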